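/- For unit vectors x ∈ S² and a tangent vector p at x (p·x = 0) with p ≠ 0, the point m = x·(‖p‖² - 1)/(‖p‖² + 1) - p·2/(‖p‖² + 1) is a unit vector, and it satisfies 1 - x·m = 2/(‖p‖² + 1) > 0. -/
import Mathlib


open scoped RealInnerProductSpace

/-- The reflector-antenna (logarithmic cost) optimal map formula on the sphere:
for unit `x` and nonzero tangent `p` at `x`, the point
`m = ((‖p‖²-1)/(‖p‖²+1)) x - (2/(‖p‖²+1)) p` is a unit vector with
`1 - x⬝m = 2/(‖p‖²+1) > 0`. -/
theorem log_cost_map_unit (x p : EuclideanSpace ℝ (Fin 3))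
    (hx : ‖x‖ = 1) (hpx : ⟪p, x⟫ = 0) (hp : p ≠ 0) :
    ‖((‖p‖ ^ 2 - 1) / (‖p‖ ^ 2 + 1)) • x - (2 / (‖p‖ ^ 2 + 1)) • p‖ = 1 ∧
    1 - ⟪x, ((‖p‖ ^ 2 - 1) / (‖p‖ ^ 2 + 1)) • x - (2 / (‖p‖ ^ 2 + 1)) • p⟫
        = 2 / (‖p‖ ^ 2 + 1) ∧
    0 < 2 / (‖p‖ ^ 2 + 1) := by
  have ht : (0:ℝ) < ‖p‖ ^ 2 + 1 := by positivity
  have hxp : ⟪x, p⟫ = 0 := by rw [real_inner_comm]; exact hpx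
  have hxx : ⟪x, x⟫ = 1 := by rw [real_inner_self_eq_norm_sq, hx]; norm_num
  have hpp : ⟪p, p⟫ = ‖p‖ ^ 2 := by rw [real_inner_self_eq_norm_sq]
  refine ⟨?_, ?_, by positivity⟩
  · have h2 : ⟪((‖p‖ ^ 2 - 1) / (‖p‖ ^ 2 + 1)) • x - (2 / (‖p‖ ^ 2 + 1)) • p,
        ((‖p‖ ^ 2 - 1) / (‖p‖ ^ 2 + 1)) • x - (2 / (‖p‖ ^ 2 + 1)) • p⟫ = 1 := by
      simp only [inner_sub_left, inner_sub_right, inner_smul_left, inner_smul_right,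
        RCLike.conj_to_real, hxx, hxp, hpx, hpp]
      field_simp
      ring
    have := real_inner_self_eq_norm_sq
      (((‖p‖ ^ 2 - 1) / (‖p‖ ^ 2 + 1)) • x - (2 / (‖p‖ ^ 2 + 1)) • p)
    nlinarith [norm_nonneg (((‖p‖ ^ 2 - 1) / (‖p‖ ^ 2 + 1)) • x - (2 / (‖p‖ ^ 2 + 1)) • p)]
  · simp only [inner_sub_right, inner_smul_right, hxx, hxp]
    field_simp
    ring
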